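/- arXiv:0706.2465 — 2 statements merged into one kernel-verified Lean document; each statement's English description precedes it below -/
import Mathlib

section
/- Let B be an invertible upper triangular n×n matrix over a field and X a strictly lower triangular n×n matrix. Then the matrix B X B^{−1}, restricted to its strictly lower triangular part, together with its (non-strict) upper triangular part being in general nonzero, satisfies: the conjugation action X ↦ (strictly lower part of B X B^{−1}) defines a group action of the group of invertible upper triangular matrices on the space of strictly lower triangular matrices. That is, for B, B' invertible upper triangular, L(B', L(B, X)) = L(B'B, X), where L(B,X) denotes the strictly lower triangular part of B X B^{−1}. -/
open Matrix

/-- The strictly lower triangular part of a matrix. -/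
def lowerPart {F : Type*} [Field F] {n : ℕ} (M : Matrix (Fin n) (Fin n) F) :
    Matrix (Fin n) (Fin n) F :=
  Matrix.of fun i j => if j < i then M i j else 0

lemma lowerPart_sub {F : Type*} [Field F] {n : ℕ} (A C : Matrix (Fin n) (Fin n) F) :
    lowerPart (A - C) = lowerPart A - lowerPart C := by
  ext i j
  simp [lowerPart]
  split <;> simp

lemma lowerPart_of_upper {F : Type*} [Field F] {n : ℕ} (M : Matrix (Fin n) (Fin n) F)
    (h : ∀ i j : Fin n, j < i → M i j = 0) : lowerPart M = 0 := by
  ext i j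
  simp only [lowerPart, of_apply, Matrix.zero_apply]
  split
  · exact h i j ‹_›
  · rfl

/-- `X ↦ L(B,X) :=` strictly lower part of `B X B⁻¹` defines an
action of the group of invertible upper triangular matrices on strictly lower
triangular matrices: `L(B', L(B,X)) = L(B'B, X)`. -/
theorem stmt12 (F : Type*) [Field F] (n : ℕ) (B B' X : Matrix (Fin n) (Fin n) F)
    (hBunit : IsUnit B.det) (hB'unit : IsUnit B'.det)
    (hB : ∀ i j : Fin n, j < i → B i j = 0)
    (hB' : ∀ i j : Fin n, j < i → B' i j = 0)
    (hX : ∀ i j : Fin n, i ≤ j → X i j = 0) :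
    lowerPart (B' * lowerPart (B * X * B⁻¹) * B'⁻¹) =
      lowerPart ((B' * B) * X * (B' * B)⁻¹) := by
  set Y := B * X * B⁻¹ with hY
  set U := Y - lowerPart Y with hU
  haveI : Invertible B' := B'.invertibleOfIsUnitDet hB'unit
  have hB'T : B'.BlockTriangular id := fun i j h => hB' i j h
  have hB'invT : (B'⁻¹).BlockTriangular id :=
    blockTriangular_inv_of_blockTriangular hB'T
  have hUT : U.BlockTriangular id := by
    intro i j h
    simp only [hU, Matrix.sub_apply, lowerPart, of_apply]
    simp [show (j : Fin n) < i from h]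
  have hconjT : (B' * U * B'⁻¹).BlockTriangular id := (hB'T.mul hUT).mul hB'invT
  have key : lowerPart (B' * U * B'⁻¹) = 0 :=
    lowerPart_of_upper _ fun i j h => hconjT h
  have hsplit : lowerPart Y = Y - U := by rw [hU]; abel
  have hinv : (B' * B)⁻¹ = B⁻¹ * B'⁻¹ := Matrix.mul_inv_rev B' B
  calc lowerPart (B' * lowerPart Y * B'⁻¹)
      = lowerPart (B' * Y * B'⁻¹ - B' * U * B'⁻¹) := by
        rw [hsplit, Matrix.mul_sub, Matrix.sub_mul]
    _ = lowerPart (B' * Y * B'⁻¹) - lowerPart (B' * U * B'⁻¹) := lowerPart_sub _ _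
    _ = lowerPart (B' * Y * B'⁻¹) := by rw [key, sub_zero]
    _ = lowerPart ((B' * B) * X * (B' * B)⁻¹) := by
        rw [hinv, hY]
        congr 1
        simp only [Matrix.mul_assoc]
end

section
/- In the universal enveloping algebra of t0(4) (strictly upper triangular 4×4 matrices, basis e_{12}, e_{13}, e_{14}, e_{23}, e_{24}, e_{34}), the element C = e_{13} e_{24} − e_{14} e_{23} commutes with every generator e_{ij} (1 ≤ i < j ≤ 4), i.e., C is a Casimir operator of t0(4). -/
open Matrix

attribute [local instance 100] LieRing.ofAssociativeRing

/-- Image of the elementary matrix `e_{ab}` in the universal enveloping algebra. -/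
noncomputable def UEAe (F : Type*) [Field F] (a b : Fin 4) :
    UniversalEnvelopingAlgebra F (Matrix (Fin 4) (Fin 4) F) :=
  UniversalEnvelopingAlgebra.ι F (Matrix.single a b (1 : F))

lemma UEAe_key (F : Type*) [Field F] (a b c d : Fin 4) :
    UEAe F a b * UEAe F c d = UEAe F c d * UEAe F a b +
      UniversalEnvelopingAlgebra.ι F
        (Matrix.single a b (1 : F) * Matrix.single c d (1 : F)) -
      UniversalEnvelopingAlgebra.ι F
        (Matrix.single c d (1 : F) * Matrix.single a b (1 : F)) := by
  have h := LieHom.map_lie (UniversalEnvelopingAlgebra.ι F)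
    (Matrix.single a b (1 : F)) (Matrix.single c d (1 : F))
  rw [Ring.lie_def, Ring.lie_def, map_sub] at h
  rw [UEAe, UEAe, add_sub_assoc, h]
  abel

/-- If the matrix products vanish both ways, the images commute. -/
lemma UEAe_comm (F : Type*) [Field F] {a b c d : Fin 4} (h1 : b ≠ c) (h2 : d ≠ a) :
    UEAe F a b * UEAe F c d = UEAe F c d * UEAe F a b := by
  rw [UEAe_key, Matrix.single_mul_single_of_ne (h := h1),
    Matrix.single_mul_single_of_ne (h := h2), map_zero]
  abel

lemma UEAe_shift (F : Type*) [Field F] {a b c d : Fin 4} (h1 : b ≠ c) (h2 : d = a) :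
    UEAe F a b * UEAe F c d = UEAe F c d * UEAe F a b - UEAe F c b := by
  subst h2
  rw [UEAe_key, Matrix.single_mul_single_of_ne (h := h1), Matrix.single_mul_single_same,
    map_zero, one_mul, UEAe]
  abel

lemma UEAe_shift' (F : Type*) [Field F] {a b c d : Fin 4} (h1 : b = c) (h2 : d ≠ a) :
    UEAe F a b * UEAe F c d = UEAe F c d * UEAe F a b + UEAe F a d := by
  subst h1
  rw [UEAe_key, Matrix.single_mul_single_of_ne (h := h2), Matrix.single_mul_single_same,
    map_zero, one_mul, UEAe]
  abel

lemma UEA_main (F : Type*) [Field F] (i j : Fin 4) (hij : i < j) :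
    (UEAe F 0 2 * UEAe F 1 3 - UEAe F 0 3 * UEAe F 1 2) * UEAe F i j =
      UEAe F i j * (UEAe F 0 2 * UEAe F 1 3 - UEAe F 0 3 * UEAe F 1 2) := by
  have hAB := UEAe_comm F (a := 0) (b := 2) (c := 1) (d := 3) (by decide) (by decide)
  have hAP := UEAe_comm F (a := 0) (b := 2) (c := 0) (d := 3) (by decide) (by decide)
  have hAQ := UEAe_comm F (a := 0) (b := 2) (c := 1) (d := 2) (by decide) (by decide)
  have hBP := UEAe_comm F (a := 1) (b := 3) (c := 0) (d := 3) (by decide) (by decide)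
  have hBQ := UEAe_comm F (a := 1) (b := 3) (c := 1) (d := 2) (by decide) (by decide)
  have hPQ := UEAe_comm F (a := 0) (b := 3) (c := 1) (d := 2) (by decide) (by decide)
  set A := UEAe F 0 2 with hA
  set B := UEAe F 1 3 with hB
  set P := UEAe F 0 3 with hP
  set Q := UEAe F 1 2 with hQ
  fin_cases i <;> fin_cases j <;> first
    | exact absurd hij (by decide)
    | -- generator e₀₁
      (show (A * B - P * Q) * UEAe F 0 1 = UEAe F 0 1 * (A * B - P * Q)
       have hBG := UEAe_shift F (a := 1) (b := 3) (c := 0) (d := 1) (by decide) rfl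
       have hQG := UEAe_shift F (a := 1) (b := 2) (c := 0) (d := 1) (by decide) rfl
       have hAG := UEAe_comm F (a := 0) (b := 2) (c := 0) (d := 1) (by decide) (by decide)
       have hPG := UEAe_comm F (a := 0) (b := 3) (c := 0) (d := 1) (by decide) (by decide)
       simp only [← hA, ← hB, ← hP, ← hQ] at hBG hQG hAG hPG
       set G := UEAe F 0 1
       calc (A * B - P * Q) * G = A * (B * G) - P * (Q * G) := by noncomm_ring
         _ = A * (G * B - P) - P * (G * Q - A) := by rw [hBG, hQG]
         _ = (A * G) * B - (P * G) * Q - (A * P - P * A) := by noncomm_ring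
         _ = (G * A) * B - (G * P) * Q - 0 := by rw [hAG, hPG, hAP, sub_self]
         _ = G * (A * B - P * Q) := by noncomm_ring)
    | -- generator e₂₃
      (show (A * B - P * Q) * UEAe F 2 3 = UEAe F 2 3 * (A * B - P * Q)
       have hAG := UEAe_shift' F (a := 0) (b := 2) (c := 2) (d := 3) rfl (by decide)
       have hQG := UEAe_shift' F (a := 1) (b := 2) (c := 2) (d := 3) rfl (by decide)
       have hBG := UEAe_comm F (a := 1) (b := 3) (c := 2) (d := 3) (by decide) (by decide)
       have hPG := UEAe_comm F (a := 0) (b := 3) (c := 2) (d := 3) (by decide) (by decide)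
       simp only [← hA, ← hB, ← hP, ← hQ] at hAG hQG hBG hPG
       set G := UEAe F 2 3
       calc (A * B - P * Q) * G = A * (B * G) - P * (Q * G) := by noncomm_ring
         _ = A * (G * B) - P * (G * Q + B) := by rw [hBG, hQG]
         _ = (A * G) * B - (P * G) * Q - P * B := by noncomm_ring
         _ = (G * A + P) * B - (G * P) * Q - P * B := by rw [hAG, hPG]
         _ = G * (A * B - P * Q) := by noncomm_ring)
    | -- generator e₀₂
      exact show Commute (A * B - P * Q) A from
        Commute.sub_left (Commute.mul_left (Commute.refl A) hAB.symm)
          (Commute.mul_left hAP.symm hAQ.symm)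
    | -- generator e₀₃
      exact show Commute (A * B - P * Q) P from
        Commute.sub_left (Commute.mul_left hAP hBP)
          (Commute.mul_left (Commute.refl P) hPQ.symm)
    | -- generator e₁₂
      exact show Commute (A * B - P * Q) Q from
        Commute.sub_left (Commute.mul_left hAQ hBQ)
          (Commute.mul_left hPQ (Commute.refl Q))
    | -- generator e₁₃
      exact show Commute (A * B - P * Q) B from
        Commute.sub_left (Commute.mul_left hAB (Commute.refl B))
          (Commute.mul_left hBP.symm hBQ.symm)

/-- in the universal enveloping algebra, the element
`C = e₁₃e₂₄ − e₁₄e₂₃` (the 2×2 determinant `det(e_{ij})_{i=1,2; j=3,4}`)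
commutes with every generator `e_{ij}` (`i < j`) of `t0(4)`, i.e. `C` is a
Casimir operator of `t0(4)`. -/
theorem stmt18 (F : Type*) [Field F] :
    let ι := UniversalEnvelopingAlgebra.ι F (L := Matrix (Fin 4) (Fin 4) F)
    let C := ι (Matrix.single (0 : Fin 4) (2 : Fin 4) (1 : F)) *
        ι (Matrix.single (1 : Fin 4) (3 : Fin 4) (1 : F)) -
      ι (Matrix.single (0 : Fin 4) (3 : Fin 4) (1 : F)) *
        ι (Matrix.single (1 : Fin 4) (2 : Fin 4) (1 : F))
    ∀ i j : Fin 4, i < j →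
      C * ι (Matrix.single i j (1 : F)) =
        ι (Matrix.single i j (1 : F)) * C := by
  intro ι C i j hij
  exact UEA_main F i j hij
end
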